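/- Let G[A,B] be a bipartite graph. If G is decomposable as G = G[A_1,B_1] ∘ G[A_2,B_2] (Tyshkevich composition, where every vertex of A_1 is joined to every vertex of B_2) with both factors non-empty, then for any x ∈ A_1 and y ∈ B_2, the edge xy is contained in no alternating cycle of G, and the degree sequence d(G) + 𝟙_x + 𝟙_y is not graphic as a bipartite degree sequence. -/

import Mathlib

/-- Degree on the `A`-side of a bipartite graph given by `E : A → B → Bool`. -/
def degA {A B : Type*} [Fintype B] (E : A → B → Bool) (a : A) : ℕ :=
  (Finset.univ.filter fun b => E a b = true).card

/-- Degree on the `B`-side. -/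
def degB {A B : Type*} [Fintype A] (E : A → B → Bool) (b : B) : ℕ :=
  (Finset.univ.filter fun a => E a b = true).card

/-- `E` realizes the bipartite degree sequence `(dA; dB)`. -/
def Realizes {A B : Type*} [Fintype A] [Fintype B]
    (E : A → B → Bool) (dA : A → ℕ) (dB : B → ℕ) : Prop :=
  (∀ a, degA E a = dA a) ∧ (∀ b, degB E b = dB b)

/-- The bipartite degree sequence `(dA; dB)` is graphic. -/
def BipGraphic {A B : Type*} [Fintype A] [Fintype B]
    (dA : A → ℕ) (dB : B → ℕ) : Prop :=
  ∃ E : A → B → Bool, Realizes E dA dB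

/-- There is an alternating cycle of the bipartite graph `E` traversing the
pair `(x, y)` (as one of its edges or one of its non-edges): a cycle
`a 0, b 0, a 1, b 1, …` with `a i b i` edges and `a (i+1) b i` non-edges. -/
def AltCycleOn {A B : Type*} (E : A → B → Bool) (x : A) (y : B) : Prop :=
  ∃ (m : ℕ) (a : ZMod m → A) (b : ZMod m → B), 2 ≤ m ∧
    Function.Injective a ∧ Function.Injective b ∧
    (∀ i, E (a i) (b i) = true) ∧ (∀ i, E (a (i + 1)) (b i) = false) ∧
    ((∃ i, a i = x ∧ b i = y) ∨ (∃ i, a (i + 1) = x ∧ b i = y))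

/-- The Tyshkevich composition of two splitted bipartite graphs: every vertex
of the first class of the first factor is joined to every vertex of the second
class of the second factor. -/
def bcomp {A₁ B₁ A₂ B₂ : Type*} (E₁ : A₁ → B₁ → Bool) (E₂ : A₂ → B₂ → Bool) :
    A₁ ⊕ A₂ → B₁ ⊕ B₂ → Bool
  | Sum.inl a, Sum.inl b => E₁ a b
  | Sum.inl _, Sum.inr _ => true
  | Sum.inr _, Sum.inl _ => false
  | Sum.inr a, Sum.inr b => E₂ a b

/-- If `G = G₁ ∘ G₂` is a Tyshkevich composition with both factors non-empty,
then for `x` in the first class of `G₁` and `y` in the second class of `G₂`,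
the edge `xy` lies on no alternating cycle, and `d(G) + 𝟙_x + 𝟙_y` is not
graphic. -/
theorem stmt_5 {A₁ B₁ A₂ B₂ : Type*}
    [Fintype A₁] [Fintype B₁] [Fintype A₂] [Fintype B₂]
    [DecidableEq A₁] [DecidableEq B₁] [DecidableEq A₂] [DecidableEq B₂]
    (E₁ : A₁ → B₁ → Bool) (E₂ : A₂ → B₂ → Bool) (x : A₁) (y : B₂) :
    ¬ AltCycleOn (bcomp E₁ E₂) (Sum.inl x) (Sum.inr y) ∧
    ¬ BipGraphic
        (fun a : A₁ ⊕ A₂ =>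
          degA (bcomp E₁ E₂) a + if a = Sum.inl x then 1 else 0)
        (fun b : B₁ ⊕ B₂ =>
          degB (bcomp E₁ E₂) b + if b = Sum.inr y then 1 else 0) := by
  constructor
  · rintro ⟨m, a, b, hm, ha, hb, hedge, hnon, hxy⟩
    rcases hxy with ⟨i, hax, hby⟩ | ⟨i, hax, hby⟩
    · have key : ∀ k : ℕ, ∃ a', a (i + 1 + (k : ZMod m)) = Sum.inr a' := by
        intro k
        induction k with
        | zero =>
          have h := hnon i
          rw [hby] at h
          simp only [Nat.cast_zero, add_zero]
          cases h' : a (i + 1) with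
          | inl a' => rw [h'] at h; simp [bcomp] at h
          | inr a' => exact ⟨a', rfl⟩
        | succ k ih =>
          obtain ⟨a', ha'⟩ := ih
          have he := hedge (i + 1 + (k : ZMod m))
          rw [ha'] at he
          cases hb' : b (i + 1 + (k : ZMod m)) with
          | inl b' => rw [hb'] at he; simp [bcomp] at he
          | inr b' =>
            have hn := hnon (i + 1 + (k : ZMod m))
            rw [hb'] at hn
            push_cast
            cases h' : a (i + 1 + (k : ZMod m) + 1) with
            | inl a'' => rw [h'] at hn; simp [bcomp] at hn
            | inr a'' =>
              exact ⟨a'', by rw [show i + 1 + ((k : ZMod m) + 1) =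
                i + 1 + (k : ZMod m) + 1 by ring, h']⟩
      obtain ⟨a', ha'⟩ := key (m - 1)
      have hcast : i + 1 + ((m - 1 : ℕ) : ZMod m) = i := by
        have h1 : ((1 + (m - 1) : ℕ) : ZMod m) = 0 := by
          rw [show 1 + (m - 1) = m from by omega, ZMod.natCast_self]
        push_cast at h1
        rw [add_assoc, h1, add_zero]
      rw [hcast, hax] at ha'
      simp at ha'
    · have h := hnon i
      rw [hax, hby] at h
      simp [bcomp] at h
  · rintro ⟨E, hA, hB⟩
    have hdegA : ∀ (c : A₁ ⊕ A₂),
        degA E c = ∑ d : B₁ ⊕ B₂, if E c d = true then 1 else 0 :=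
      fun c => Finset.card_filter _ _
    have hdegB : ∀ (d : B₁ ⊕ B₂),
        degB E d = ∑ c : A₁ ⊕ A₂, if E c d = true then 1 else 0 :=
      fun d => Finset.card_filter _ _
    have hbc1 : ∀ c : A₂, degA (bcomp E₁ E₂) (Sum.inr c) = degA E₂ c := by
      intro c
      unfold degA
      rw [Finset.card_filter, Finset.card_filter, Fintype.sum_sum_type]
      simp [bcomp]
      rw [Finset.card_filter]
      congr
    have hbc2 : ∀ d : B₂,
        degB (bcomp E₁ E₂) (Sum.inr d) = Fintype.card A₁ + degB E₂ d := by
      intro d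
      unfold degB
      rw [Finset.card_filter, Finset.card_filter, Fintype.sum_sum_type]
      simp [bcomp, Finset.card_univ]
      rw [Finset.card_filter]
      congr
    have e2sym : ∑ c : A₂, degA E₂ c = ∑ d : B₂, degB E₂ d := by
      unfold degA degB
      simp_rw [Finset.card_filter]
      exact Finset.sum_comm
    have hub : ∑ d : B₂, degB E (Sum.inr d)
        ≤ Fintype.card B₂ * Fintype.card A₁ + ∑ d : B₂, degB E₂ d := by
      calc ∑ d : B₂, degB E (Sum.inr d)
          = ∑ d : B₂, ((∑ c : A₁, if E (Sum.inl c) (Sum.inr d) = true then 1 else 0)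
            + ∑ c : A₂, if E (Sum.inr c) (Sum.inr d) = true then 1 else 0) := by
            simp_rw [hdegB, Fintype.sum_sum_type]
        _ ≤ ∑ d : B₂, (Fintype.card A₁
            + ∑ c : A₂, if E (Sum.inr c) (Sum.inr d) = true then 1 else 0) := by
            apply Finset.sum_le_sum
            intro d _
            have h1 : (∑ c : A₁, if E (Sum.inl c) (Sum.inr d) = true then 1 else 0)
                ≤ Fintype.card A₁ := by
              calc (∑ c : A₁, if E (Sum.inl c) (Sum.inr d) = true then 1 else 0)
                  ≤ ∑ _c : A₁, 1 := Finset.sum_le_sum (fun c _ => by split <;> omega)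
                _ = Fintype.card A₁ := by simp
            omega
        _ = Fintype.card B₂ * Fintype.card A₁
            + ∑ c : A₂, ∑ d : B₂, if E (Sum.inr c) (Sum.inr d) = true then 1 else 0 := by
            rw [Finset.sum_add_distrib, Finset.sum_const, Finset.card_univ,
              Finset.sum_comm, smul_eq_mul]
        _ ≤ Fintype.card B₂ * Fintype.card A₁ + ∑ c : A₂, degA E (Sum.inr c) := by
            gcongr with c _
            rw [hdegA, Fintype.sum_sum_type]
            exact Nat.le_add_left _ _
        _ = Fintype.card B₂ * Fintype.card A₁ + ∑ c : A₂, degA E₂ c := by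
            congr 1
            refine Finset.sum_congr rfl fun c _ => ?_
            rw [hA (Sum.inr c)]
            simp [hbc1]
        _ = Fintype.card B₂ * Fintype.card A₁ + ∑ d : B₂, degB E₂ d := by rw [e2sym]
    have hlb : ∑ d : B₂, degB E (Sum.inr d)
        = Fintype.card B₂ * Fintype.card A₁ + ∑ d : B₂, degB E₂ d + 1 := by
      calc ∑ d : B₂, degB E (Sum.inr d)
          = ∑ d : B₂, (Fintype.card A₁ + degB E₂ d + if d = y then 1 else 0) := by
            refine Finset.sum_congr rfl fun d _ => ?_
            rw [hB (Sum.inr d)]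
            simp [hbc2]
        _ = Fintype.card B₂ * Fintype.card A₁ + ∑ d : B₂, degB E₂ d + 1 := by
            rw [Finset.sum_add_distrib, Finset.sum_add_distrib, Finset.sum_const,
              Finset.card_univ, Finset.sum_ite_eq' Finset.univ y, smul_eq_mul]
            simp [mul_comm]
    omega
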